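/- arXiv:2207.05777 — 4 statements merged into one kernel-verified Lean document; each statement's English description precedes it below -/
import Mathlib

section
/- Let Θ be a nonempty closed convex subset of ℝ^d, let Z be a metric space with its Borel σ-algebra, let ℓ : Z × ℝ^d → ℝ, let γ, β > 0 and ω, ε > 0, and for each θ ∈ Θ let P_θ be a Borel probability measure on Z (the worst-case distribution of the distributionally robust objective at θ). Assume: (i) for each θ ∈ Θ, the map ξ ↦ E_{Z∼P_θ}[ℓ(Z; ξ)] is differentiable and γ-strongly convex on Θ, with gradient equal to ξ ↦ E_{Z∼P_θ}[∇_ξ ℓ(Z; ξ)], where for each ξ the map z ↦ ∇_ξ ℓ(z; ξ) is integrable with respect to every P_θ; (ii) for each ξ ∈ Θ, the map z ↦ ∇_ξ ℓ(z; ξ) is β-Lipschitz; (iii) the family (P_θ)_{θ∈Θ} is (ωε)-sensitive in dual (Kantorovich–Rubinstein) form. Let G : Θ → Θ be such that for every θ ∈ Θ, G(θ) minimizes ξ ↦ E_{Z∼P_θ}[ℓ(Z; ξ)] over Θ. Then for all θ, θ' ∈ Θ, ‖G(θ) − G(θ')‖ ≤ ωε(β/γ)‖θ − θ'‖. -/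
open MeasureTheory

open scoped RealInnerProductSpace

/-- First-order inequality for a convex function: the linear approximation at `x`
lies below the chord value. -/
lemma convexOn_hasFDerivAt_le {E : Type*} [NormedAddCommGroup E] [NormedSpace ℝ E]
    {s : Set E} {f : E → ℝ} {f' : E →L[ℝ] ℝ} {x y : E}
    (hf : ConvexOn ℝ s f) (hx : x ∈ s) (hy : y ∈ s)
    (hd : HasFDerivAt f f' x) : f' (y - x) ≤ f y - f x := by
  set φ : ℝ → ℝ := fun t => f (x + t • (y - x)) with hφ
  have hc : HasDerivAt (fun t : ℝ => x + t • (y - x)) (y - x) 0 := by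
    simpa using ((hasDerivAt_id (0 : ℝ)).smul_const (y - x)).const_add x
  have hder : HasDerivAt φ (f' (y - x)) 0 := by
    have hd' : HasFDerivAt f f' ((fun t : ℝ => x + t • (y - x)) 0) := by simpa using hd
    simpa [hφ, Function.comp_def] using hd'.comp_hasDerivAt 0 hc
  have htend : Filter.Tendsto (slope φ 0) (nhdsWithin 0 (Set.Ioi 0)) (nhds (f' (y - x))) := by
    refine (hasDerivAt_iff_tendsto_slope.mp hder).mono_left ?_
    exact nhdsWithin_mono 0 (fun t ht => ne_of_gt ht)
  refine le_of_tendsto htend ?_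
  filter_upwards [Ioo_mem_nhdsGT_of_mem (Set.left_mem_Ico.mpr zero_lt_one)] with t ht
  have ht0 : 0 < t := ht.1
  have ht1 : t < 1 := ht.2
  have hpt : x + t • (y - x) = (1 - t) • x + t • y := by
    simp [smul_sub, sub_smul]; abel
  have hconv : φ t ≤ (1 - t) * f x + t * f y := by
    have := hf.2 hx hy (by linarith : (0:ℝ) ≤ 1 - t) ht0.le (by ring)
    simpa [hφ, hpt, smul_eq_mul] using this
  have hφ0 : φ 0 = f x := by simp [hφ]
  rw [slope_def_field]
  have : (φ t - φ 0) / (t - 0) ≤ f y - f x := by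
    rw [sub_zero, div_le_iff₀ ht0]
    have : φ t - f x ≤ t * (f y - f x) := by rw [hφ0] at *; nlinarith
    linarith [hφ0 ▸ this]
  simpa [slope_def_field, div_eq_inv_mul] using this

/-- First-order optimality condition for a minimizer over a convex set. -/
lemma isMinOn_hasFDerivAt_nonneg {E : Type*} [NormedAddCommGroup E] [NormedSpace ℝ E]
    {s : Set E} {f : E → ℝ} {f' : E →L[ℝ] ℝ} {x y : E}
    (hs : Convex ℝ s) (hmin : IsMinOn f s x) (hx : x ∈ s) (hy : y ∈ s)
    (hd : HasFDerivAt f f' x) : 0 ≤ f' (y - x) :=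
  hmin.localize.hasFDerivWithinAt_nonneg hd.hasFDerivWithinAt
    (sub_mem_posTangentConeAt_of_segment_subset (hs.segment_subset hx hy))

set_option maxHeartbeats 1000000 in
/-- Claim (1) of the paper's main theorem: under robust strong convexity, robust joint
smoothness and robust ε-sensitivity (in dual Kantorovich–Rubinstein form), the repeated
distributionally robust optimization operator `G` is `ωε(β/γ)`-Lipschitz. -/
theorem rdro_operator_contraction
    {d : ℕ} (Θ : Set (EuclideanSpace ℝ (Fin d)))
    (hΘne : Θ.Nonempty) (hΘclosed : IsClosed Θ) (hΘconv : Convex ℝ Θ)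
    {Z : Type*} [MetricSpace Z] [MeasurableSpace Z] [BorelSpace Z]
    (ℓ : Z → EuclideanSpace ℝ (Fin d) → ℝ)
    (γ β ω ε : ℝ) (hγ : 0 < γ) (hβ : 0 < β) (hω : 0 < ω) (hε : 0 < ε)
    (P : EuclideanSpace ℝ (Fin d) → Measure Z)
    (hProb : ∀ θ ∈ Θ, IsProbabilityMeasure (P θ))
    -- (i) differentiability and γ-strong convexity on Θ of the robust objective,
    -- whose gradient is the expectation of the gradient of the loss
    (hdiff : ∀ θ ∈ Θ, Differentiable ℝ (fun ξ => ∫ z, ℓ z ξ ∂(P θ)))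
    (hsc : ∀ θ ∈ Θ, ConvexOn ℝ Θ
      (fun ξ => (∫ z, ℓ z ξ ∂(P θ)) - γ / 2 * ‖ξ‖ ^ 2))
    (hgradInt : ∀ (ξ : EuclideanSpace ℝ (Fin d)), ∀ θ ∈ Θ,
      Integrable (fun z => gradient (ℓ z) ξ) (P θ))
    (hgrad : ∀ θ ∈ Θ, ∀ ξ : EuclideanSpace ℝ (Fin d),
      gradient (fun ξ' => ∫ z, ℓ z ξ' ∂(P θ)) ξ = ∫ z, gradient (ℓ z) ξ ∂(P θ))
    -- (ii) β-joint smoothness in z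
    (hsmooth : ∀ ξ ∈ Θ, ∀ z z' : Z,
      ‖gradient (ℓ z) ξ - gradient (ℓ z') ξ‖ ≤ β * dist z z')
    -- (iii) (ωε)-sensitivity in dual (Kantorovich–Rubinstein) form
    (hsens : ∀ g : Z → ℝ, LipschitzWith 1 g → (∀ θ ∈ Θ, Integrable g (P θ)) →
      ∀ θ ∈ Θ, ∀ θ' ∈ Θ,
        |(∫ z, g z ∂(P θ)) - ∫ z, g z ∂(P θ')| ≤ ω * ε * ‖θ - θ'‖)
    -- the RDRO update operator
    (G : EuclideanSpace ℝ (Fin d) → EuclideanSpace ℝ (Fin d))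
    (hGmem : ∀ θ ∈ Θ, G θ ∈ Θ)
    (hGmin : ∀ θ ∈ Θ, ∀ ξ ∈ Θ, (∫ z, ℓ z (G θ) ∂(P θ)) ≤ ∫ z, ℓ z ξ ∂(P θ)) :
    ∀ θ ∈ Θ, ∀ θ' ∈ Θ, ‖G θ - G θ'‖ ≤ ω * ε * (β / γ) * ‖θ - θ'‖ := by
  intro θ hθ θ' hθ'
  classical
  set x := G θ with hxdef
  set y := G θ' with hydef
  have hxΘ : x ∈ Θ := hGmem θ hθ
  have hyΘ : y ∈ Θ := hGmem θ' hθ'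
  set F : EuclideanSpace ℝ (Fin d) → EuclideanSpace ℝ (Fin d) → ℝ :=
    fun t ξ => ∫ z, ℓ z ξ ∂(P t) with hFdef
  -- Fréchet derivatives of F t given by the gradient
  have hFd : ∀ t ∈ Θ, ∀ ξ, HasFDerivAt (F t)
      ((InnerProductSpace.toDual ℝ (EuclideanSpace ℝ (Fin d))) (gradient (F t) ξ)) ξ := by
    intro t ht ξ
    exact hasGradientAt_iff_hasFDerivAt.mp ((hdiff t ht ξ).hasGradientAt)
  -- derivative of the quadratic part
  have hqd : ∀ ξ : EuclideanSpace ℝ (Fin d), HasFDerivAt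
      (fun w : EuclideanSpace ℝ (Fin d) => γ / 2 * ‖w‖ ^ 2)
      ((γ / 2) • ((fderivInnerCLM ℝ (ξ, ξ)).comp
        ((ContinuousLinearMap.id ℝ _).prod (ContinuousLinearMap.id ℝ _)))) ξ := by
    intro ξ
    have h1 : HasFDerivAt (fun w : EuclideanSpace ℝ (Fin d) => ⟪w, w⟫)
        ((fderivInnerCLM ℝ (ξ, ξ)).comp
          ((ContinuousLinearMap.id ℝ _).prod (ContinuousLinearMap.id ℝ _))) ξ := by
      simpa using (hasFDerivAt_id ξ).inner ℝ (hasFDerivAt_id ξ)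
    have h2 := h1.const_mul (γ / 2)
    have : (fun w : EuclideanSpace ℝ (Fin d) => γ / 2 * ⟪w, w⟫)
        = fun w : EuclideanSpace ℝ (Fin d) => γ / 2 * ‖w‖ ^ 2 := by
      funext w; rw [real_inner_self_eq_norm_sq]
    rwa [this] at h2
  have hqval : ∀ ξ v : EuclideanSpace ℝ (Fin d),
      ((γ / 2) • ((fderivInnerCLM ℝ (ξ, ξ)).comp
        ((ContinuousLinearMap.id ℝ _).prod (ContinuousLinearMap.id ℝ _)))) v = γ * ⟪ξ, v⟫ := by
    intro ξ v
    simp [fderivInnerCLM_apply, real_inner_comm ξ v]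
    ring
  -- strong monotonicity of the gradient of F θ on Θ
  have hmono : γ * ‖x - y‖ ^ 2
      ≤ ⟪gradient (F θ) x, x - y⟫ - ⟪gradient (F θ) y, x - y⟫ := by
    have hconv := hsc θ hθ
    have hdx : HasFDerivAt (fun ξ => F θ ξ - γ / 2 * ‖ξ‖ ^ 2)
        ((InnerProductSpace.toDual ℝ (EuclideanSpace ℝ (Fin d))) (gradient (F θ) x)
          - ((γ / 2) • ((fderivInnerCLM ℝ (x, x)).comp
            ((ContinuousLinearMap.id ℝ _).prod (ContinuousLinearMap.id ℝ _))))) x :=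
      (hFd θ hθ x).sub (hqd x)
    have hdy : HasFDerivAt (fun ξ => F θ ξ - γ / 2 * ‖ξ‖ ^ 2)
        ((InnerProductSpace.toDual ℝ (EuclideanSpace ℝ (Fin d))) (gradient (F θ) y)
          - ((γ / 2) • ((fderivInnerCLM ℝ (y, y)).comp
            ((ContinuousLinearMap.id ℝ _).prod (ContinuousLinearMap.id ℝ _))))) y :=
      (hFd θ hθ y).sub (hqd y)
    have h1 := convexOn_hasFDerivAt_le hconv hxΘ hyΘ hdx
    have h2 := convexOn_hasFDerivAt_le hconv hyΘ hxΘ hdy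
    have e1 : ((InnerProductSpace.toDual ℝ (EuclideanSpace ℝ (Fin d))) (gradient (F θ) x)
          - ((γ / 2) • ((fderivInnerCLM ℝ (x, x)).comp
            ((ContinuousLinearMap.id ℝ _).prod (ContinuousLinearMap.id ℝ _))))) (y - x)
        = ⟪gradient (F θ) x, y - x⟫ - γ * ⟪x, y - x⟫ := by
      simp only [ContinuousLinearMap.sub_apply, InnerProductSpace.toDual_apply_apply, hqval]
    have e2 : ((InnerProductSpace.toDual ℝ (EuclideanSpace ℝ (Fin d))) (gradient (F θ) y)
          - ((γ / 2) • ((fderivInnerCLM ℝ (y, y)).comp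
            ((ContinuousLinearMap.id ℝ _).prod (ContinuousLinearMap.id ℝ _))))) (x - y)
        = ⟪gradient (F θ) y, x - y⟫ - γ * ⟪y, x - y⟫ := by
      simp only [ContinuousLinearMap.sub_apply, InnerProductSpace.toDual_apply_apply, hqval]
    rw [e1] at h1
    rw [e2] at h2
    have hxy : ⟪x, y - x⟫ + ⟪y, x - y⟫ = -‖x - y‖ ^ 2 := by
      have : (⟪x - y, x - y⟫ : ℝ) = ‖x - y‖ ^ 2 := real_inner_self_eq_norm_sq _
      have hx1 : (⟪x, y - x⟫ : ℝ) = ⟪x, y⟫ - ⟪x, x⟫ := by rw [inner_sub_right]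
      have hy1 : (⟪y, x - y⟫ : ℝ) = ⟪y, x⟫ - ⟪y, y⟫ := by rw [inner_sub_right]
      have hexp : (⟪x - y, x - y⟫ : ℝ) = ⟪x, x⟫ - ⟪x, y⟫ - ⟪y, x⟫ + ⟪y, y⟫ := by
        rw [inner_sub_left, inner_sub_right, inner_sub_right]; ring
      rw [hx1, hy1]; rw [hexp] at this; linarith
    have hgxy : (⟪gradient (F θ) x, y - x⟫ : ℝ) = - ⟪gradient (F θ) x, x - y⟫ := by
      rw [← inner_neg_right]; congr 1; abel
    nlinarith [h1, h2, hxy, hgxy]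
  -- first-order optimality at the two minimizers
  have hopt1 : (0:ℝ) ≤ ⟪gradient (F θ) x, y - x⟫ := by
    have hmin : IsMinOn (F θ) Θ x := isMinOn_iff.mpr (fun ξ hξ => hGmin θ hθ ξ hξ)
    have := isMinOn_hasFDerivAt_nonneg hΘconv hmin hxΘ hyΘ (hFd θ hθ x)
    simpa [InnerProductSpace.toDual_apply_apply] using this
  have hopt2 : (0:ℝ) ≤ ⟪gradient (F θ') y, x - y⟫ := by
    have hmin : IsMinOn (F θ') Θ y := isMinOn_iff.mpr (fun ξ hξ => hGmin θ' hθ' ξ hξ)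
    have := isMinOn_hasFDerivAt_nonneg hΘconv hmin hyΘ hxΘ (hFd θ' hθ' y)
    simpa [InnerProductSpace.toDual_apply_apply] using this
  -- the gradient-difference vector
  set v : EuclideanSpace ℝ (Fin d) := gradient (F θ) y - gradient (F θ') y with hvdef
  -- bound on ‖v‖ via sensitivity
  have hvbound : ‖v‖ ≤ β * (ω * ε * ‖θ - θ'‖) := by
    rcases eq_or_ne v 0 with hv0 | hv0
    · rw [hv0, norm_zero]
      positivity
    · have hvpos : 0 < ‖v‖ := norm_pos_iff.mpr hv0
      set c : ℝ := β * ‖v‖ with hcdef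
      have hcpos : 0 < c := mul_pos hβ hvpos
      set g : Z → ℝ := fun z => ⟪v, gradient (ℓ z) y⟫ / c with hgdef
      have hglip : LipschitzWith 1 g := by
        refine LipschitzWith.of_dist_le_mul (fun z z' => ?_)
        rw [Real.dist_eq]
        have : g z - g z' = ⟪v, gradient (ℓ z) y - gradient (ℓ z') y⟫ / c := by
          rw [hgdef]; simp only [inner_sub_right]; ring
        rw [this, abs_div, abs_of_pos hcpos, div_le_iff₀ hcpos]
        calc |(⟪v, gradient (ℓ z) y - gradient (ℓ z') y⟫ : ℝ)|
            ≤ ‖v‖ * ‖gradient (ℓ z) y - gradient (ℓ z') y‖ := abs_real_inner_le_norm _ _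
          _ ≤ ‖v‖ * (β * dist z z') := by
              exact mul_le_mul_of_nonneg_left (hsmooth y hyΘ z z') (norm_nonneg v)
          _ = 1 * dist z z' * c := by rw [hcdef]; ring
      have hgint : ∀ t ∈ Θ, Integrable g (P t) := by
        intro t ht
        exact ((hgradInt y t ht).const_inner v).div_const c
      have hkey := hsens g hglip hgint θ hθ θ' hθ'
      have hintθ : ∫ z, g z ∂(P θ) = ⟪v, ∫ z, gradient (ℓ z) y ∂(P θ)⟫ / c := by
        rw [hgdef]
        simp only [integral_div]
        rw [integral_inner (hgradInt y θ hθ)]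
      have hintθ' : ∫ z, g z ∂(P θ') = ⟪v, ∫ z, gradient (ℓ z) y ∂(P θ')⟫ / c := by
        rw [hgdef]
        simp only [integral_div]
        rw [integral_inner (hgradInt y θ' hθ')]
      rw [hintθ, hintθ', div_sub_div_same, abs_div, abs_of_pos hcpos,
        div_le_iff₀ hcpos] at hkey
      have hvv : (⟪v, ∫ z, gradient (ℓ z) y ∂(P θ)⟫ : ℝ)
          - ⟪v, ∫ z, gradient (ℓ z) y ∂(P θ')⟫ = ‖v‖ ^ 2 := by
        rw [← inner_sub_right, ← hgrad θ hθ y, ← hgrad θ' hθ' y, ← hvdef,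
          real_inner_self_eq_norm_sq]
      rw [hvv] at hkey
      have : ‖v‖ ^ 2 ≤ ω * ε * ‖θ - θ'‖ * (β * ‖v‖) := by
        calc ‖v‖ ^ 2 ≤ |‖v‖ ^ 2| := le_abs_self _
          _ ≤ ω * ε * ‖θ - θ'‖ * c := hkey
          _ = ω * ε * ‖θ - θ'‖ * (β * ‖v‖) := by rw [hcdef]
      have hmm : ‖v‖ * ‖v‖ ≤ (β * (ω * ε * ‖θ - θ'‖)) * ‖v‖ := by
        calc ‖v‖ * ‖v‖ = ‖v‖ ^ 2 := (sq ‖v‖).symm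
          _ ≤ ω * ε * ‖θ - θ'‖ * (β * ‖v‖) := this
          _ = (β * (ω * ε * ‖θ - θ'‖)) * ‖v‖ := by ring
      exact le_of_mul_le_mul_right hmm hvpos
  -- combine everything
  have hchain : γ * ‖x - y‖ ^ 2 ≤ ‖v‖ * ‖x - y‖ := by
    have h1 : (⟪gradient (F θ) x, x - y⟫ : ℝ) ≤ 0 := by
      have : (⟪gradient (F θ) x, x - y⟫ : ℝ) = - ⟪gradient (F θ) x, y - x⟫ := by
        rw [← inner_neg_right]; congr 1; abel
      rw [this]; linarith
    have h2 : - (⟪gradient (F θ) y, x - y⟫ : ℝ) ≤ - ⟪v, x - y⟫ := by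
      have : (⟪v, x - y⟫ : ℝ) = ⟪gradient (F θ) y, x - y⟫ - ⟪gradient (F θ') y, x - y⟫ := by
        rw [hvdef, inner_sub_left]
      linarith
    have h3 : - (⟪v, x - y⟫ : ℝ) ≤ ‖v‖ * ‖x - y‖ := by
      have := real_inner_le_norm (-v) (x - y)
      simpa [inner_neg_left] using this
    linarith [hmono]
  rcases eq_or_lt_of_le (norm_nonneg (x - y)) with hxy0 | hxy0
  · rw [← hxy0]
    positivity
  · have hγxy : γ * ‖x - y‖ ≤ ‖v‖ := by
      have := le_of_mul_le_mul_right (by nlinarith : (γ * ‖x - y‖) * ‖x - y‖ ≤ ‖v‖ * ‖x - y‖) hxy0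
      exact this
    have : γ * ‖x - y‖ ≤ β * (ω * ε * ‖θ - θ'‖) := le_trans hγxy hvbound
    rw [show ω * ε * (β / γ) * ‖θ - θ'‖ = (β * (ω * ε * ‖θ - θ'‖)) / γ by field_simp,
      le_div_iff₀ hγ]
    linarith [this]
end

section
/- Let Θ be a nonempty closed convex subset of ℝ^d, let Z be a metric space with its Borel σ-algebra, let ℓ : Z × ℝ^d → ℝ, let γ, β > 0 and ω, ε > 0 with ωε < γ/β, and for each θ ∈ Θ let P_θ be a Borel probability measure on Z (the worst-case distribution of the distributionally robust objective at θ). Assume: (i) for each θ ∈ Θ, the map ξ ↦ E_{Z∼P_θ}[ℓ(Z; ξ)] is differentiable and γ-strongly convex on Θ, with gradient equal to ξ ↦ E_{Z∼P_θ}[∇_ξ ℓ(Z; ξ)], where for each ξ the map z ↦ ∇_ξ ℓ(z; ξ) is integrable with respect to every P_θ; (ii) for each ξ ∈ Θ, the map z ↦ ∇_ξ ℓ(z; ξ) is β-Lipschitz; (iii) the family (P_θ)_{θ∈Θ} is (ωε)-sensitive in dual (Kantorovich–Rubinstein) form. Let G : Θ → Θ be such that for every θ ∈ Θ, G(θ)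 minimizes ξ ↦ E_{Z∼P_θ}[ℓ(Z; ξ)] over Θ. Then there is a unique θ_PS ∈ Θ with G(θ_PS) = θ_PS, and for any θ₀ ∈ Θ with θ₀ ≠ θ_PS, the iterates θ_{t+1} = G(θ_t) satisfy ‖θ_t − θ_PS‖ ≤ δ for every δ > 0 and every natural number t ≥ (1 − ωεβ/γ)⁻¹ · log(‖θ₀ − θ_PS‖/δ). -/
open MeasureTheory
open scoped RealInnerProductSpace

/-- Expansion of the squared norm of a convex combination in a real inner product space. -/
lemma rdro_norm_combo {F : Type*} [NormedAddCommGroup F] [InnerProductSpace ℝ F]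
    (x y : F) {a b : ℝ} (hab : a + b = 1) :
    ‖a • x + b • y‖ ^ 2 = a * ‖x‖ ^ 2 + b * ‖y‖ ^ 2 - a * b * ‖x - y‖ ^ 2 := by
  have h1 := norm_add_sq_real (a • x) (b • y)
  have h2 := norm_sub_sq_real x y
  rw [norm_smul, norm_smul, real_inner_smul_left, real_inner_smul_right] at h1
  simp only [Real.norm_eq_abs, mul_pow, sq_abs] at h1
  rw [h1, h2]
  have hb : b = 1 - a := by linarith
  subst hb; ring

/-- Claim (2) of the paper's main theorem: if `ωε < γ/β`, repeated distributionally robust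
optimization converges to a unique robustly performatively stable point at a linear rate:
`‖θ_t − θ_PS‖ ≤ δ` once `t ≥ (1 − ωεβ/γ)⁻¹ log(‖θ₀ − θ_PS‖/δ)`. -/
theorem rdro_converges_to_stable_point
    {d : ℕ} (Θ : Set (EuclideanSpace ℝ (Fin d)))
    (hΘne : Θ.Nonempty) (hΘclosed : IsClosed Θ) (hΘconv : Convex ℝ Θ)
    {Z : Type*} [MetricSpace Z] [MeasurableSpace Z] [BorelSpace Z]
    (ℓ : Z → EuclideanSpace ℝ (Fin d) → ℝ)
    (γ β ω ε : ℝ) (hγ : 0 < γ) (hβ : 0 < β) (hω : 0 < ω) (hε : 0 < ε)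
    (hcontr : ω * ε < γ / β)
    (P : EuclideanSpace ℝ (Fin d) → Measure Z)
    (hProb : ∀ θ ∈ Θ, IsProbabilityMeasure (P θ))
    -- (i) differentiability and γ-strong convexity on Θ of the robust objective,
    -- whose gradient is the expectation of the gradient of the loss
    (hdiff : ∀ θ ∈ Θ, Differentiable ℝ (fun ξ => ∫ z, ℓ z ξ ∂(P θ)))
    (hsc : ∀ θ ∈ Θ, ConvexOn ℝ Θ
      (fun ξ => (∫ z, ℓ z ξ ∂(P θ)) - γ / 2 * ‖ξ‖ ^ 2))
    (hgradInt : ∀ (ξ : EuclideanSpace ℝ (Fin d)), ∀ θ ∈ Θ,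
      Integrable (fun z => gradient (ℓ z) ξ) (P θ))
    (hgrad : ∀ θ ∈ Θ, ∀ ξ : EuclideanSpace ℝ (Fin d),
      gradient (fun ξ' => ∫ z, ℓ z ξ' ∂(P θ)) ξ = ∫ z, gradient (ℓ z) ξ ∂(P θ))
    -- (ii) β-joint smoothness in z
    (hsmooth : ∀ ξ ∈ Θ, ∀ z z' : Z,
      ‖gradient (ℓ z) ξ - gradient (ℓ z') ξ‖ ≤ β * dist z z')
    -- (iii) (ωε)-sensitivity in dual (Kantorovich–Rubinstein) form
    (hsens : ∀ g : Z → ℝ, LipschitzWith 1 g → (∀ θ ∈ Θ, Integrable g (P θ)) →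
      ∀ θ ∈ Θ, ∀ θ' ∈ Θ,
        |(∫ z, g z ∂(P θ)) - ∫ z, g z ∂(P θ')| ≤ ω * ε * ‖θ - θ'‖)
    -- the RDRO update operator
    (G : EuclideanSpace ℝ (Fin d) → EuclideanSpace ℝ (Fin d))
    (hGmem : ∀ θ ∈ Θ, G θ ∈ Θ)
    (hGmin : ∀ θ ∈ Θ, ∀ ξ ∈ Θ, (∫ z, ℓ z (G θ) ∂(P θ)) ≤ ∫ z, ℓ z ξ ∂(P θ)) :
    ∃ θPS ∈ Θ, G θPS = θPS ∧
      (∀ θ' ∈ Θ, G θ' = θ' → θ' = θPS) ∧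
      ∀ θ₀ ∈ Θ, θ₀ ≠ θPS → ∀ δ : ℝ, 0 < δ → ∀ t : ℕ,
        (1 - ω * ε * (β / γ))⁻¹ * Real.log (‖θ₀ - θPS‖ / δ) ≤ (t : ℝ) →
        ‖G^[t] θ₀ - θPS‖ ≤ δ := by
  set c : ℝ := ω * ε * (β / γ) with hcdef
  have hc0 : 0 < c := by positivity
  have hc1 : c < 1 := by
    rw [hcdef, mul_div_assoc']
    rw [div_lt_one hγ]
    calc ω * ε * β < γ / β * β := mul_lt_mul_of_pos_right hcontr hβ
      _ = γ := by field_simp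
  -- Quadratic growth around the minimizer, from strong convexity
  have quad : ∀ θ ∈ Θ, ∀ y ∈ Θ,
      (∫ z, ℓ z (G θ) ∂(P θ)) + γ / 2 * ‖y - G θ‖ ^ 2 ≤ ∫ z, ℓ z y ∂(P θ) := by
    intro θ hθ y hy
    have hx : G θ ∈ Θ := hGmem θ hθ
    have h : ∀ t ∈ Set.Ioo (0 : ℝ) 1,
        (∫ z, ℓ z (G θ) ∂(P θ)) + γ / 2 * ‖y - G θ‖ ^ 2
          ≤ (∫ z, ℓ z y ∂(P θ)) + t * (γ / 2 * ‖y - G θ‖ ^ 2) := by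
      rintro t ⟨ht0, ht1⟩
      have hmem : (1 - t) • (G θ) + t • y ∈ Θ :=
        hΘconv hx hy (by linarith) ht0.le (by ring)
      have hconv := (hsc θ hθ).2 hx hy (show (0:ℝ) ≤ 1 - t by linarith)
        ht0.le (show (1 - t) + t = 1 by ring)
      have hmin := hGmin θ hθ _ hmem
      have hid := rdro_norm_combo (G θ) y (a := 1 - t) (b := t) (by ring)
      simp only [smul_eq_mul] at hconv
      rw [hid] at hconv
      have hrev : ‖y - G θ‖ = ‖G θ - y‖ := norm_sub_rev y (G θ)
      rw [hrev]
      have key : t * (∫ z, ℓ z (G θ) ∂(P θ))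
          ≤ t * (∫ z, ℓ z y ∂(P θ)) - γ / 2 * (t * (1 - t)) * ‖G θ - y‖ ^ 2 := by
        linarith [hconv, hmin]
      have h2 : t * ((∫ z, ℓ z (G θ) ∂(P θ)) + γ / 2 * ‖G θ - y‖ ^ 2)
          ≤ t * ((∫ z, ℓ z y ∂(P θ)) + t * (γ / 2 * ‖G θ - y‖ ^ 2)) := by
        linarith [key]
      exact le_of_mul_le_mul_left h2 ht0
    have htend : Filter.Tendsto
        (fun t : ℝ => (∫ z, ℓ z y ∂(P θ)) + t * (γ / 2 * ‖y - G θ‖ ^ 2))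
        (nhdsWithin 0 (Set.Ioi 0))
        (nhds ((∫ z, ℓ z y ∂(P θ)) + 0 * (γ / 2 * ‖y - G θ‖ ^ 2))) := by
      apply Filter.Tendsto.mono_left _ nhdsWithin_le_nhds
      exact tendsto_const_nhds.add ((continuous_id.mul continuous_const).tendsto 0)
    rw [zero_mul, add_zero] at htend
    refine ge_of_tendsto htend ?_
    filter_upwards [Ioo_mem_nhdsGT_of_mem (Set.mem_Ico.mpr ⟨le_refl (0:ℝ), one_pos⟩)] with t ht
    exact h t ht
  -- Sensitivity bound on the gradient integrals
  have gradBound : ∀ ξ ∈ Θ, ∀ θ ∈ Θ, ∀ θ' ∈ Θ,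
      ‖(∫ z, gradient (ℓ z) ξ ∂(P θ)) - ∫ z, gradient (ℓ z) ξ ∂(P θ')‖
        ≤ β * (ω * ε * ‖θ - θ'‖) := by
    intro ξ hξ θ hθ θ' hθ'
    set v : EuclideanSpace ℝ (Fin d) :=
      (∫ z, gradient (ℓ z) ξ ∂(P θ)) - ∫ z, gradient (ℓ z) ξ ∂(P θ') with hv
    rcases eq_or_ne v 0 with h0 | h0
    · rw [h0, norm_zero]; positivity
    have hr : 0 < ‖v‖ := norm_pos_iff.mpr h0
    have hβr : 0 < β * ‖v‖ := by positivity
    set g : Z → ℝ := fun z => (β * ‖v‖)⁻¹ * ⟪v, gradient (ℓ z) ξ⟫ with hg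
    have hlip : LipschitzWith 1 g := by
      apply LipschitzWith.of_dist_le_mul
      intro z z'
      simp only [NNReal.coe_one, one_mul, Real.dist_eq]
      have heq : g z - g z' = (β * ‖v‖)⁻¹ * ⟪v, gradient (ℓ z) ξ - gradient (ℓ z') ξ⟫ := by
        rw [hg]; simp only [inner_sub_right]; ring
      rw [heq, abs_mul, abs_inv, abs_of_pos hβr]
      have hb := hsmooth ξ hξ z z'
      calc (β * ‖v‖)⁻¹ * |⟪v, gradient (ℓ z) ξ - gradient (ℓ z') ξ⟫|
          ≤ (β * ‖v‖)⁻¹ * (‖v‖ * (β * dist z z')) := by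
            apply mul_le_mul_of_nonneg_left _ (inv_nonneg.mpr hβr.le)
            calc |⟪v, gradient (ℓ z) ξ - gradient (ℓ z') ξ⟫|
                ≤ ‖v‖ * ‖gradient (ℓ z) ξ - gradient (ℓ z') ξ‖ := abs_real_inner_le_norm _ _
              _ ≤ ‖v‖ * (β * dist z z') := mul_le_mul_of_nonneg_left hb (norm_nonneg v)
        _ = dist z z' := by field_simp
    have hint : ∀ θ'' ∈ Θ, Integrable g (P θ'') := fun θ'' hθ'' =>
      (Integrable.const_inner v (hgradInt ξ θ'' hθ'')).const_mul _
    have hs := hsens g hlip hint θ hθ θ' hθ'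
    have hInt1 : (∫ z, g z ∂(P θ))
        = (β * ‖v‖)⁻¹ * ⟪v, ∫ z, gradient (ℓ z) ξ ∂(P θ)⟫ := by
      rw [hg]
      rw [integral_const_mul, integral_inner (hgradInt ξ θ hθ)]
    have hInt2 : (∫ z, g z ∂(P θ'))
        = (β * ‖v‖)⁻¹ * ⟪v, ∫ z, gradient (ℓ z) ξ ∂(P θ')⟫ := by
      rw [hg]
      rw [integral_const_mul, integral_inner (hgradInt ξ θ' hθ')]
    rw [hInt1, hInt2, ← mul_sub, ← inner_sub_right] at hs
    have hvv : ⟪v, (∫ z, gradient (ℓ z) ξ ∂(P θ)) - ∫ z, gradient (ℓ z) ξ ∂(P θ')⟫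
        = ‖v‖ ^ 2 := by
      rw [← hv, real_inner_self_eq_norm_sq]
    rw [hvv, abs_mul, abs_inv, abs_of_pos hβr,
      abs_of_nonneg (by positivity : (0:ℝ) ≤ ‖v‖ ^ 2)] at hs
    have hsimp : (β * ‖v‖)⁻¹ * ‖v‖ ^ 2 = ‖v‖ / β := by field_simp
    rw [hsimp, div_le_iff₀ hβ] at hs
    calc ‖v‖ ≤ ω * ε * ‖θ - θ'‖ * β := hs
      _ = β * (ω * ε * ‖θ - θ'‖) := by ring
  -- The contraction property of G
  have contract : ∀ θ ∈ Θ, ∀ θ' ∈ Θ, ‖G θ - G θ'‖ ≤ c * ‖θ - θ'‖ := by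
    intro θ hθ θ' hθ'
    have haΘ : G θ ∈ Θ := hGmem θ hθ
    have hbΘ : G θ' ∈ Θ := hGmem θ' hθ'
    have q1 := quad θ hθ (G θ') hbΘ
    have q2 := quad θ' hθ' (G θ) haΘ
    -- mean value bound for the difference of objectives on Θ
    have hmv : ‖((∫ z, ℓ z (G θ') ∂(P θ)) - ∫ z, ℓ z (G θ') ∂(P θ'))
          - ((∫ z, ℓ z (G θ) ∂(P θ)) - ∫ z, ℓ z (G θ) ∂(P θ'))‖
        ≤ β * (ω * ε * ‖θ - θ'‖) * ‖G θ' - G θ‖ := by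
      apply hΘconv.norm_image_sub_le_of_norm_hasFDerivWithin_le
        (f := fun ξ => (∫ z, ℓ z ξ ∂(P θ)) - ∫ z, ℓ z ξ ∂(P θ'))
        (f' := fun ξ => fderiv ℝ (fun ξ' => ∫ z, ℓ z ξ' ∂(P θ)) ξ
          - fderiv ℝ (fun ξ' => ∫ z, ℓ z ξ' ∂(P θ')) ξ)
        ?_ ?_ haΘ hbΘ
      · intro x _
        exact (((hdiff θ hθ) x).hasFDerivAt.sub ((hdiff θ' hθ') x).hasFDerivAt).hasFDerivWithinAt
      · intro x hxΘ
        have e1 : fderiv ℝ (fun ξ' => ∫ z, ℓ z ξ' ∂(P θ)) x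
            = (InnerProductSpace.toDual ℝ (EuclideanSpace ℝ (Fin d)))
                (∫ z, gradient (ℓ z) x ∂(P θ)) := by
          rw [← hgrad θ hθ x, gradient]
          exact ((InnerProductSpace.toDual ℝ (EuclideanSpace ℝ (Fin d))).apply_symm_apply _).symm
        have e2 : fderiv ℝ (fun ξ' => ∫ z, ℓ z ξ' ∂(P θ')) x
            = (InnerProductSpace.toDual ℝ (EuclideanSpace ℝ (Fin d)))
                (∫ z, gradient (ℓ z) x ∂(P θ')) := by
          rw [← hgrad θ' hθ' x, gradient]
          exact ((InnerProductSpace.toDual ℝ (EuclideanSpace ℝ (Fin d))).apply_symm_apply _).symm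
        show ‖fderiv ℝ (fun ξ' => ∫ z, ℓ z ξ' ∂(P θ)) x
          - fderiv ℝ (fun ξ' => ∫ z, ℓ z ξ' ∂(P θ')) x‖ ≤ β * (ω * ε * ‖θ - θ'‖)
        rw [e1, e2, ← map_sub, LinearIsometryEquiv.norm_map]
        exact gradBound x hxΘ θ hθ θ' hθ'
    have hDba : ((∫ z, ℓ z (G θ') ∂(P θ)) - ∫ z, ℓ z (G θ') ∂(P θ'))
          - ((∫ z, ℓ z (G θ) ∂(P θ)) - ∫ z, ℓ z (G θ) ∂(P θ'))
        ≤ β * (ω * ε * ‖θ - θ'‖) * ‖G θ' - G θ‖ := le_trans (le_abs_self _) hmv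
    have hnorm : ‖G θ' - G θ‖ = ‖G θ - G θ'‖ := norm_sub_rev _ _
    rw [hnorm] at hDba q1
    have hγab : γ * ‖G θ - G θ'‖ ^ 2
        ≤ β * (ω * ε * ‖θ - θ'‖) * ‖G θ - G θ'‖ := by
      linarith [q1, q2, hDba]
    rcases eq_or_lt_of_le (norm_nonneg (G θ - G θ')) with h0 | h0
    · rw [← h0]; positivity
    · rw [pow_two] at hγab
      have hcancel : γ * ‖G θ - G θ'‖ ≤ β * (ω * ε * ‖θ - θ'‖) :=
        le_of_mul_le_mul_right (by linarith [hγab]) h0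
      calc ‖G θ - G θ'‖ ≤ β * (ω * ε * ‖θ - θ'‖) / γ := by
            rw [le_div_iff₀ hγ]; linarith [hcancel]
        _ = c * ‖θ - θ'‖ := by rw [hcdef]; ring
  -- Banach fixed point on the closed set Θ
  haveI : Nonempty Θ := hΘne.to_subtype
  haveI : CompleteSpace Θ := hΘclosed.completeSpace_coe
  set K : NNReal := ⟨c, hc0.le⟩ with hK
  set f : Θ → Θ := fun x => ⟨G x, hGmem x x.2⟩ with hf
  have hlipf : LipschitzWith K f := by
    apply LipschitzWith.of_dist_le_mul
    intro x y
    rw [Subtype.dist_eq, Subtype.dist_eq]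
    show dist (G x) (G y) ≤ c * dist (x : EuclideanSpace ℝ (Fin d)) y
    rw [dist_eq_norm, dist_eq_norm]
    exact contract x x.2 y y.2
  have hCW : ContractingWith K f := ⟨by exact_mod_cast hc1, hlipf⟩
  set θPSs : Θ := ContractingWith.fixedPoint f hCW with hθPSs
  have hfix : f θPSs = θPSs := hCW.fixedPoint_isFixedPt
  set θPS : EuclideanSpace ℝ (Fin d) := (θPSs : EuclideanSpace ℝ (Fin d)) with hθPS
  have hθPSΘ : θPS ∈ Θ := θPSs.2
  have hGfix : G θPS = θPS := congrArg Subtype.val hfix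
  refine ⟨θPS, hθPSΘ, hGfix, ?_, ?_⟩
  · -- uniqueness
    intro θ' hθ' hfix'
    have h := contract θ' hθ' θPS hθPSΘ
    rw [hfix', hGfix] at h
    have : (1 - c) * ‖θ' - θPS‖ ≤ 0 := by nlinarith [h]
    have hn : ‖θ' - θPS‖ ≤ 0 := by nlinarith [norm_nonneg (θ' - θPS), hc1]
    have : θ' - θPS = 0 := norm_le_zero_iff.mp hn
    exact sub_eq_zero.mp this
  · -- convergence rate
    intro θ₀ hθ₀ hne δ hδ t ht
    have hmemIter : ∀ n : ℕ, G^[n] θ₀ ∈ Θ := by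
      intro n
      induction n with
      | zero => simpa using hθ₀
      | succ n ih => rw [Function.iterate_succ_apply']; exact hGmem _ ih
    set r : ℝ := ‖θ₀ - θPS‖ with hrdef
    have hr : 0 < r := by
      rw [hrdef, norm_pos_iff]
      exact sub_ne_zero.mpr hne
    have hiter : ∀ n : ℕ, ‖G^[n] θ₀ - θPS‖ ≤ c ^ n * r := by
      intro n
      induction n with
      | zero => simp [hrdef]
      | succ n ih =>
        rw [Function.iterate_succ_apply']
        calc ‖G (G^[n] θ₀) - θPS‖ = ‖G (G^[n] θ₀) - G θPS‖ := by rw [hGfix]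
          _ ≤ c * ‖G^[n] θ₀ - θPS‖ := contract _ (hmemIter n) θPS hθPSΘ
          _ ≤ c * (c ^ n * r) := by
              exact mul_le_mul_of_nonneg_left ih hc0.le
          _ = c ^ (n + 1) * r := by ring
    have h1c : 0 < 1 - c := by linarith
    have hlog1 : Real.log (r / δ) ≤ (1 - c) * t := (inv_mul_le_iff₀ h1c).mp ht
    have hlogc : Real.log c ≤ c - 1 := Real.log_le_sub_one_of_pos hc0
    have hct : (c : ℝ) ^ t = Real.exp ((t : ℝ) * Real.log c) := by
      rw [Real.exp_nat_mul, Real.exp_log hc0]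
    have hlogdr : Real.log (δ / r) = -Real.log (r / δ) := by
      rw [← Real.log_inv]
      congr 1
      field_simp
    have hexp : (c : ℝ) ^ t ≤ δ / r := by
      rw [hct, ← Real.exp_log (by positivity : (0:ℝ) < δ / r)]
      apply Real.exp_le_exp.mpr
      have h2 : (t : ℝ) * Real.log c ≤ (t : ℝ) * (c - 1) :=
        mul_le_mul_of_nonneg_left hlogc (Nat.cast_nonneg t)
      rw [hlogdr]
      nlinarith [h2, hlog1]
    calc ‖G^[t] θ₀ - θPS‖ ≤ c ^ t * r := hiter t
      _ ≤ (δ / r) * r := mul_le_mul_of_nonneg_right hexp hr.le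
      _ = δ := by field_simp
end

section
/- Let Θ be a nonempty closed convex subset of ℝ^d, let Z be a metric space with its Borel σ-algebra, let γ, β > 0 and ε > 0, and for each θ ∈ Θ let D(θ) be a Borel probability measure on Z (the distribution induced by deploying the model θ). Let ℓ : Z × ℝ^d → ℝ be a loss such that: (i) for each z ∈ Z, the map ξ ↦ ℓ(z; ξ) is differentiable and γ-strongly convex on Θ; (ii) for each ξ ∈ Θ, the map z ↦ ∇_ξ ℓ(z; ξ) is β-Lipschitz, and for each z, the map ξ ↦ ∇_ξ ℓ(z; ξ) is β-Lipschitz on Θ; (iii) for each θ ∈ Θ, the map ξ ↦ E_{Z∼D(θ)}[ℓ(Z; ξ)] is differentiable with gradient ξ ↦ E_{Z∼D(θ)}[∇_ξ ℓ(Z; ξ)], where z ↦ ∇_ξ ℓ(z; ξ) is integrable with respect to every D(θ); (iv) the family (D(θ))_{θ∈Θ} is ε-sensitive in dual (Kantorovich–Rubinstein) form. Let G : Θ → Θ be such that for every θ ∈ Θ, G(θ) minimizes ξ ↦ E_{Z∼D(θ)}[ℓ(Z; ξ)] over Θ. Then for all θ, θ' ∈ Θ, ‖G(θ) − G(θ')‖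 ≤ ε(β/γ)‖θ − θ'‖. -/
open MeasureTheory

open scoped RealInnerProductSpace

section Aux
variable {E : Type*} [NormedAddCommGroup E] [InnerProductSpace ℝ E]

private lemma aux_curve_hasDerivAt (x v : E) (t : ℝ) :
    HasDerivAt (fun s : ℝ => x + s • v) v t := by
  simpa using ((hasDerivAt_id t).smul_const v).const_add x

private lemma aux_mem_segment {Θ : Set E} (hΘ : Convex ℝ Θ) {x y : E}
    (hx : x ∈ Θ) (hy : y ∈ Θ) {a : ℝ} (ha : a ∈ Set.Icc (0:ℝ) 1) :
    x + a • (y - x) ∈ Θ := by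
  have h := hΘ hx hy (by linarith [ha.2] : (0:ℝ) ≤ 1 - a) ha.1 (by ring)
  convert h using 1
  rw [smul_sub]
  match_scalars <;> ring

/-- Gradient inequality for a differentiable convex function. -/
private lemma aux_grad_ineq {Θ : Set E} (hΘ : Convex ℝ Θ) {g : E → ℝ}
    (hd : Differentiable ℝ g) {x y : E} (hx : x ∈ Θ) (hy : y ∈ Θ)
    (hg : ConvexOn ℝ Θ g) :
    fderiv ℝ g x (y - x) ≤ g y - g x := by
  set v := y - x with hv
  set φ : ℝ → ℝ := fun t => g (x + t • v) with hφ
  have hφd : ∀ t : ℝ, HasDerivAt φ (fderiv ℝ g (x + t • v) v) t := fun t =>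
    (hd _).hasFDerivAt.comp_hasDerivAt t (aux_curve_hasDerivAt x v t)
  have hconv : ConvexOn ℝ (Set.Icc (0:ℝ) 1) φ := by
    refine ⟨convex_Icc 0 1, fun a ha b hb s t hs ht hst => ?_⟩
    have key : x + (s * a + t * b) • v = s • (x + a • v) + t • (x + b • v) := by
      have hx1 : s • x + t • x = x := by rw [← add_smul, hst, one_smul]
      rw [smul_add, smul_add, smul_smul, smul_smul]
      calc x + (s * a + t * b) • v = (s • x + t • x) + ((s * a) • v + (t * b) • v) := by
            rw [hx1, add_smul]
        _ = s • x + (s * a) • v + (t • x + (t * b) • v) := by abel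
    have h2 := hg.2 (aux_mem_segment hΘ hx hy ha) (aux_mem_segment hΘ hx hy hb) hs ht hst
    show g (x + (s • a + t • b) • v) ≤ s • g (x + a • v) + t • g (x + b • v)
    simp only [smul_eq_mul]
    rw [key]
    exact h2
  have h01 : (0:ℝ) ∈ Set.Icc (0:ℝ) 1 := by norm_num
  have h11 : (1:ℝ) ∈ Set.Icc (0:ℝ) 1 := by norm_num
  have hs := hconv.le_slope_of_hasDerivAt h01 h11 zero_lt_one (hφd 0)
  rw [slope_def_field] at hs
  have e0 : x + (0:ℝ) • v = x := by simp
  have e1' : x + (1:ℝ) • v = y := by simp [hv]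
  calc fderiv ℝ g x (y - x) = fderiv ℝ g (x + (0:ℝ) • v) v := by rw [e0]
    _ ≤ (φ 1 - φ 0) / (1 - 0) := hs
    _ = g y - g x := by rw [hφ]; simp only [e0, e1']; norm_num

/-- First-order optimality condition. -/
private lemma aux_opt {Θ : Set E} (hΘ : Convex ℝ Θ) {f : E → ℝ} {x ξ : E}
    (hd : DifferentiableAt ℝ f x) (hx : x ∈ Θ) (hξ : ξ ∈ Θ)
    (hmin : ∀ ζ ∈ Θ, f x ≤ f ζ) :
    0 ≤ fderiv ℝ f x (ξ - x) := by
  set v := ξ - x with hv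
  set φ : ℝ → ℝ := fun t => f (x + t • v) with hφ
  have hφd : HasDerivAt φ (fderiv ℝ f x v) 0 := by
    have hx' : HasFDerivAt f (fderiv ℝ f x) (x + (0:ℝ) • v) := by
      rw [show x + (0:ℝ) • v = x by simp]
      exact hd.hasFDerivAt
    exact hx'.comp_hasDerivAt 0 (aux_curve_hasDerivAt x v 0)
  have hslope : Filter.Tendsto (slope φ 0) (nhdsWithin 0 (Set.Ioi 0)) (nhds (fderiv ℝ f x v)) :=
    ((hasDerivAt_iff_tendsto_slope.mp hφd).mono_left
      (nhdsWithin_mono _ (fun t ht => ne_of_gt ht)))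
  refine ge_of_tendsto hslope ?_
  filter_upwards [Ioc_mem_nhdsGT_of_mem (Set.mem_Ico.mpr ⟨le_refl 0, zero_lt_one⟩)] with t ht
  have hmem : x + t • v ∈ Θ := aux_mem_segment hΘ hx hξ ⟨le_of_lt ht.1, ht.2⟩
  have h1 : f x ≤ φ t := hmin _ hmem
  have h0 : φ 0 = f x := by simp [hφ]
  show 0 ≤ slope φ 0 t
  rw [slope_def_field, h0]
  have hnum : (0:ℝ) ≤ φ t - f x := by linarith
  have hden : (0:ℝ) ≤ t - 0 := by linarith [ht.1]
  exact div_nonneg hnum hden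

variable [CompleteSpace E]

/-- fderiv applied equals inner with gradient. -/
private lemma aux_fderiv_eq_inner {f : E → ℝ} {x : E} (hd : DifferentiableAt ℝ f x) (w : E) :
    fderiv ℝ f x w = ⟪gradient f x, w⟫ := by
  rw [hd.hasGradientAt.hasFDerivAt.fderiv]
  simp [InnerProductSpace.toDual_apply_apply]

/-- Gradient monotonicity for a γ-strongly convex differentiable function. -/
private lemma aux_strong_mono {Θ : Set E} (hΘ : Convex ℝ Θ) {g : E → ℝ} {γ : ℝ}
    (hd : Differentiable ℝ g) {x y : E} (hx : x ∈ Θ) (hy : y ∈ Θ)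
    (hsc : ConvexOn ℝ Θ (fun ξ => g ξ - γ / 2 * ‖ξ‖ ^ 2)) :
    γ * ‖x - y‖ ^ 2 ≤ ⟪gradient g x, x - y⟫ - ⟪gradient g y, x - y⟫ := by
  set h : E → ℝ := fun ξ => g ξ - γ / 2 * ‖ξ‖ ^ 2 with hh
  have hn2 : Differentiable ℝ fun ξ : E => ‖ξ‖ ^ 2 :=
    (contDiff_norm_sq ℝ (n := 1)).differentiable one_ne_zero
  have hnd : Differentiable ℝ fun ξ : E => γ / 2 * ‖ξ‖ ^ 2 := hn2.const_mul _
  have hdh : Differentiable ℝ h := hd.sub hnd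
  have hfd : ∀ (ξ w : E), fderiv ℝ h ξ w = fderiv ℝ g ξ w - γ * ⟪ξ, w⟫ := by
    intro ξ w
    have h1 : fderiv ℝ h ξ w = fderiv ℝ g ξ w - γ / 2 * fderiv ℝ (fun ζ : E => ‖ζ‖ ^ 2) ξ w := by
      rw [hh, fderiv_fun_sub (hd ξ) (hnd ξ)]
      simp only [ContinuousLinearMap.sub_apply]
      congr 1
      rw [fderiv_const_mul (hn2 ξ)]
      simp
    have h2 : fderiv ℝ (fun ζ : E => ‖ζ‖ ^ 2) ξ w = 2 * ⟪ξ, w⟫ := by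
      have e : (fun ζ : E => ‖ζ‖ ^ 2) = fun ζ : E => ⟪ζ, ζ⟫ := by
        funext ζ; rw [real_inner_self_eq_norm_sq]
      rw [e, fderiv_inner_apply ℝ differentiableAt_fun_id differentiableAt_fun_id]
      simp only [fderiv_id', ContinuousLinearMap.coe_id', id_eq]
      rw [real_inner_comm w ξ]; ring
    rw [h1, h2]; ring
  have i1 : fderiv ℝ h x (y - x) ≤ h y - h x := aux_grad_ineq hΘ hdh hx hy hsc
  have i2 : fderiv ℝ h y (x - y) ≤ h x - h y := aux_grad_ineq hΘ hdh hy hx hsc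
  have isum : fderiv ℝ h x (y - x) + fderiv ℝ h y (x - y) ≤ 0 := by linarith
  rw [hfd, hfd] at isum
  have e1 : fderiv ℝ g x (y - x) = -fderiv ℝ g x (x - y) := by
    rw [show y - x = -(x - y) by abel, map_neg]
  rw [e1] at isum
  have e2 : ⟪x, y - x⟫ + ⟪y, x - y⟫ = -(‖x - y‖ ^ 2) := by
    have en : ⟪x - y, x - y⟫ = ‖x - y‖ ^ 2 := real_inner_self_eq_norm_sq _
    rw [inner_sub_left] at en
    rw [inner_sub_right, inner_sub_right] at en
    rw [inner_sub_right, inner_sub_right]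
    rw [real_inner_comm y x] at en ⊢
    linarith
  have e2' : γ * ⟪x, y - x⟫ + γ * ⟪y, x - y⟫ = -(γ * ‖x - y‖ ^ 2) := by
    linear_combination γ * e2
  rw [← aux_fderiv_eq_inner (hd x) (x - y), ← aux_fderiv_eq_inner (hd y) (x - y)]
  linarith

end Aux

/-- Claim (1) of Theorem 3.5 of Perdomo et al. as stated in the paper: under γ-strong
convexity, β-joint smoothness of the loss and ε-sensitivity of the distribution map (in
dual Kantorovich–Rubinstein form), the repeated risk minimization operator `G` is
`ε(β/γ)`-Lipschitz. -/
theorem rrm_operator_contraction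
    {d : ℕ} (Θ : Set (EuclideanSpace ℝ (Fin d)))
    (hΘne : Θ.Nonempty) (hΘclosed : IsClosed Θ) (hΘconv : Convex ℝ Θ)
    {Z : Type*} [MetricSpace Z] [MeasurableSpace Z] [BorelSpace Z]
    (ℓ : Z → EuclideanSpace ℝ (Fin d) → ℝ)
    (γ β ε : ℝ) (hγ : 0 < γ) (hβ : 0 < β) (hε : 0 < ε)
    (D : EuclideanSpace ℝ (Fin d) → Measure Z)
    (hProb : ∀ θ ∈ Θ, IsProbabilityMeasure (D θ))
    -- (i) differentiability and γ-strong convexity of the loss in the parameter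
    (hdiffℓ : ∀ z : Z, Differentiable ℝ (ℓ z))
    (hsc : ∀ z : Z, ConvexOn ℝ Θ (fun ξ => ℓ z ξ - γ / 2 * ‖ξ‖ ^ 2))
    -- (ii) β-joint smoothness of the loss
    (hsmoothz : ∀ ξ ∈ Θ, ∀ z z' : Z,
      ‖gradient (ℓ z) ξ - gradient (ℓ z') ξ‖ ≤ β * dist z z')
    (hsmoothξ : ∀ z : Z, ∀ ξ ∈ Θ, ∀ ξ' ∈ Θ,
      ‖gradient (ℓ z) ξ - gradient (ℓ z) ξ'‖ ≤ β * ‖ξ - ξ'‖)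
    -- (iii) differentiability of the expected loss with gradient the expected gradient
    (hdiff : ∀ θ ∈ Θ, Differentiable ℝ (fun ξ => ∫ z, ℓ z ξ ∂(D θ)))
    (hgradInt : ∀ (ξ : EuclideanSpace ℝ (Fin d)), ∀ θ ∈ Θ,
      Integrable (fun z => gradient (ℓ z) ξ) (D θ))
    (hgrad : ∀ θ ∈ Θ, ∀ ξ : EuclideanSpace ℝ (Fin d),
      gradient (fun ξ' => ∫ z, ℓ z ξ' ∂(D θ)) ξ = ∫ z, gradient (ℓ z) ξ ∂(D θ))
    -- (iv) ε-sensitivity in dual (Kantorovich–Rubinstein) form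
    (hsens : ∀ g : Z → ℝ, LipschitzWith 1 g → (∀ θ ∈ Θ, Integrable g (D θ)) →
      ∀ θ ∈ Θ, ∀ θ' ∈ Θ,
        |(∫ z, g z ∂(D θ)) - ∫ z, g z ∂(D θ')| ≤ ε * ‖θ - θ'‖)
    -- the RRM update operator
    (G : EuclideanSpace ℝ (Fin d) → EuclideanSpace ℝ (Fin d))
    (hGmem : ∀ θ ∈ Θ, G θ ∈ Θ)
    (hGmin : ∀ θ ∈ Θ, ∀ ξ ∈ Θ, (∫ z, ℓ z (G θ) ∂(D θ)) ≤ ∫ z, ℓ z ξ ∂(D θ)) :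
    ∀ θ ∈ Θ, ∀ θ' ∈ Θ, ‖G θ - G θ'‖ ≤ ε * (β / γ) * ‖θ - θ'‖ := by
  intro θ hθ θ' hθ'
  haveI : IsProbabilityMeasure (D θ) := hProb θ hθ
  haveI : IsProbabilityMeasure (D θ') := hProb θ' hθ'
  have hx : G θ ∈ Θ := hGmem θ hθ
  have hy : G θ' ∈ Θ := hGmem θ' hθ'
  set u : EuclideanSpace ℝ (Fin d) := G θ - G θ' with hu
  by_cases hne : ‖u‖ = 0
  · rw [hne]; positivity
  have hupos : 0 < ‖u‖ := lt_of_le_of_ne (norm_nonneg u) (Ne.symm hne)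
  -- helper: inner with fixed vector commutes with vector integral
  have hii : ∀ (ν : Measure Z) (ξ : EuclideanSpace ℝ (Fin d)),
      Integrable (fun z => gradient (ℓ z) ξ) ν →
      ∫ z, ⟪gradient (ℓ z) ξ, u⟫ ∂ν = ⟪∫ z, gradient (ℓ z) ξ ∂ν, u⟫ := by
    intro ν ξ hI
    calc ∫ z, ⟪gradient (ℓ z) ξ, u⟫ ∂ν = ∫ z, ⟪u, gradient (ℓ z) ξ⟫ ∂ν := by
          simp_rw [real_inner_comm]
      _ = ⟪u, ∫ z, gradient (ℓ z) ξ ∂ν⟫ := integral_inner hI u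
      _ = _ := real_inner_comm _ _
  -- Step A: integrated strong convexity at θ'
  have hint1 : Integrable (fun z => ⟪gradient (ℓ z) (G θ), u⟫) (D θ') :=
    (hgradInt (G θ) θ' hθ').inner_const u
  have hint2 : Integrable (fun z => ⟪gradient (ℓ z) (G θ'), u⟫) (D θ') :=
    (hgradInt (G θ') θ' hθ').inner_const u
  have hptwise : ∀ z : Z,
      γ * ‖u‖ ^ 2 ≤ ⟪gradient (ℓ z) (G θ), u⟫ - ⟪gradient (ℓ z) (G θ'), u⟫ := fun z =>
    aux_strong_mono hΘconv (hdiffℓ z) hx hy (hsc z)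
  have hA : γ * ‖u‖ ^ 2 ≤
      ⟪∫ z, gradient (ℓ z) (G θ) ∂(D θ'), u⟫ - ⟪∫ z, gradient (ℓ z) (G θ') ∂(D θ'), u⟫ := by
    have hmono := integral_mono (μ := D θ') (integrable_const (γ * ‖u‖ ^ 2))
      (hint1.sub hint2) hptwise
    simp only [Pi.sub_apply] at hmono
    rw [integral_const] at hmono
    simp only [probReal_univ, one_smul] at hmono
    rwa [integral_sub hint1 hint2, hii _ _ (hgradInt (G θ) θ' hθ'),
      hii _ _ (hgradInt (G θ') θ' hθ')] at hmono
  -- Step B: first-order optimality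
  have hopt2 : 0 ≤ ⟪∫ z, gradient (ℓ z) (G θ') ∂(D θ'), u⟫ := by
    have h := aux_opt hΘconv (hdiff θ' hθ' (G θ')) hy hx (hGmin θ' hθ')
    rwa [aux_fderiv_eq_inner (hdiff θ' hθ' (G θ')), hgrad θ' hθ'] at h
  have hopt1 : ⟪∫ z, gradient (ℓ z) (G θ) ∂(D θ), u⟫ ≤ 0 := by
    have h := aux_opt hΘconv (hdiff θ hθ (G θ)) hx hy (hGmin θ hθ)
    rw [aux_fderiv_eq_inner (hdiff θ hθ (G θ)), hgrad θ hθ] at h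
    have e : G θ' - G θ = -u := by rw [hu]; abel
    rw [e, inner_neg_right] at h
    linarith
  -- Step C: sensitivity bound
  set g : Z → ℝ := fun z => (β * ‖u‖)⁻¹ * ⟪gradient (ℓ z) (G θ), u⟫ with hg
  have hbu : 0 < β * ‖u‖ := mul_pos hβ hupos
  have hlip : LipschitzWith 1 g := by
    apply LipschitzWith.of_dist_le_mul
    intro z z'
    rw [Real.dist_eq]
    have e1 : g z - g z' = (β * ‖u‖)⁻¹ * ⟪gradient (ℓ z) (G θ) - gradient (ℓ z') (G θ), u⟫ := by
      rw [hg, inner_sub_left]; ring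
    rw [e1, abs_mul, abs_of_nonneg (inv_nonneg.mpr hbu.le)]
    have e2 : |⟪gradient (ℓ z) (G θ) - gradient (ℓ z') (G θ), u⟫| ≤
        (β * dist z z') * ‖u‖ := by
      refine le_trans (abs_real_inner_le_norm _ _) ?_
      exact mul_le_mul_of_nonneg_right (hsmoothz (G θ) hx z z') (norm_nonneg u)
    calc (β * ‖u‖)⁻¹ * |⟪gradient (ℓ z) (G θ) - gradient (ℓ z') (G θ), u⟫|
        ≤ (β * ‖u‖)⁻¹ * ((β * dist z z') * ‖u‖) := by
          exact mul_le_mul_of_nonneg_left e2 (inv_nonneg.mpr hbu.le)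
      _ = dist z z' := by field_simp
      _ ≤ ↑(1:NNReal) * dist z z' := by simp
  have hgint : ∀ θ'' ∈ Θ, Integrable g (D θ'') := fun θ'' h'' =>
    ((hgradInt (G θ) θ'' h'').inner_const u).const_mul _
  have hsb := hsens g hlip hgint θ' hθ' θ hθ
  have hgi : ∀ θ'' , ∀ h'' : θ'' ∈ Θ, ∫ z, g z ∂(D θ'') =
      (β * ‖u‖)⁻¹ * ⟪∫ z, gradient (ℓ z) (G θ) ∂(D θ''), u⟫ := by
    intro θ'' h''
    rw [hg]
    rw [integral_const_mul, hii _ _ (hgradInt (G θ) θ'' h'')]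
  rw [hgi θ' hθ', hgi θ hθ] at hsb
  have hVbound : ⟪∫ z, gradient (ℓ z) (G θ) ∂(D θ'), u⟫ -
      ⟪∫ z, gradient (ℓ z) (G θ) ∂(D θ), u⟫ ≤ ε * β * ‖u‖ * ‖θ - θ'‖ := by
    have h1 : (β * ‖u‖)⁻¹ * ⟪∫ z, gradient (ℓ z) (G θ) ∂(D θ'), u⟫ -
        (β * ‖u‖)⁻¹ * ⟪∫ z, gradient (ℓ z) (G θ) ∂(D θ), u⟫ ≤ ε * ‖θ' - θ‖ :=
      le_trans (le_abs_self _) hsb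
    rw [norm_sub_rev θ' θ] at h1
    have h2 := mul_le_mul_of_nonneg_left h1 hbu.le
    have e : β * ‖u‖ * ((β * ‖u‖)⁻¹ * ⟪∫ z, gradient (ℓ z) (G θ) ∂(D θ'), u⟫ -
        (β * ‖u‖)⁻¹ * ⟪∫ z, gradient (ℓ z) (G θ) ∂(D θ), u⟫) =
        ⟪∫ z, gradient (ℓ z) (G θ) ∂(D θ'), u⟫ -
        ⟪∫ z, gradient (ℓ z) (G θ) ∂(D θ), u⟫ := by
      field_simp
    rw [e] at h2
    calc ⟪∫ z, gradient (ℓ z) (G θ) ∂(D θ'), u⟫ -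
        ⟪∫ z, gradient (ℓ z) (G θ) ∂(D θ), u⟫ ≤ β * ‖u‖ * (ε * ‖θ - θ'‖) := h2
      _ = ε * β * ‖u‖ * ‖θ - θ'‖ := by ring
  -- Combine everything
  have hfinal : γ * ‖u‖ ^ 2 ≤ ε * β * ‖u‖ * ‖θ - θ'‖ := by linarith
  have hkey : γ * ‖u‖ ≤ ε * β * ‖θ - θ'‖ := by
    nlinarith [hupos]
  rw [show ε * (β / γ) * ‖θ - θ'‖ = (ε * β * ‖θ - θ'‖) / γ by
      rw [div_eq_mul_inv, div_eq_mul_inv]; ring,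
    le_div_iff₀ hγ]
  nlinarith
end

section
/- Let Θ be a nonempty closed convex subset of ℝ^d, let Z be a metric space with its Borel σ-algebra, let γ, β > 0 and ε > 0 with ε < γ/β, and for each θ ∈ Θ let D(θ) be a Borel probability measure on Z (the distribution induced by deploying the model θ). Let ℓ : Z × ℝ^d → ℝ be a loss such that: (i) for each z ∈ Z, the map ξ ↦ ℓ(z; ξ) is differentiable and γ-strongly convex on Θ; (ii) for each ξ ∈ Θ, the map z ↦ ∇_ξ ℓ(z; ξ) is β-Lipschitz, and for each z, the map ξ ↦ ∇_ξ ℓ(z; ξ) is β-Lipschitz on Θ; (iii) for each θ ∈ Θ, the map ξ ↦ E_{Z∼D(θ)}[ℓ(Z; ξ)] is differentiable with gradient ξ ↦ E_{Z∼D(θ)}[∇_ξ ℓ(Z; ξ)], where z ↦ ∇_ξ ℓ(z; ξ) is integrable with respect to every D(θ); (iv) the family (D(θ))_{θ∈Θ} is ε-sensitive in dual (Kantorovich–Rubinstein) form. Let G : Θ → Θ be such that for every θ ∈ Θ, G(θ) minimizes ξ ↦ E_{Z∼D(θ)}[ℓ(Z; ξ)] over Θ. Then there is a unique θ_PS ∈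 Θ with G(θ_PS) = θ_PS, and for any θ₀ ∈ Θ with θ₀ ≠ θ_PS, the iterates θ_{t+1} = G(θ_t) satisfy ‖θ_t − θ_PS‖ ≤ δ for every δ > 0 and every natural number t ≥ (1 − εβ/γ)⁻¹ · log(‖θ₀ − θ_PS‖/δ). -/
open MeasureTheory
open Set Filter Topology InnerProductSpace

local notation "⟪" x ", " y "⟫" => @inner ℝ _ _ x y

section Aux

variable {F : Type*} [NormedAddCommGroup F] [InnerProductSpace ℝ F] [CompleteSpace F]

lemma seg_mem' {s : Set F} (hs : Convex ℝ s) {x y : F} (hx : x ∈ s) (hy : y ∈ s)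
    {t : ℝ} (ht : t ∈ Icc (0:ℝ) 1) : x + t • (y - x) ∈ s := by
  have h := hs hx hy (by linarith [ht.2] : (0:ℝ) ≤ 1 - t) ht.1 (by ring)
  have he : x + t • (y - x) = (1 - t) • x + t • y := by module
  rw [he]; exact h

lemma convexOn_comp_segment' {g : F → ℝ} {s : Set F} (hg : ConvexOn ℝ s g)
    {x y : F} (hx : x ∈ s) (hy : y ∈ s) :
    ConvexOn ℝ (Icc (0:ℝ) 1) (fun t => g (x + t • (y - x))) := by
  refine ⟨convex_Icc 0 1, fun a ha b hb p q hp hq hpq => ?_⟩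
  have key : x + (p * a + q * b) • (y - x) = p • (x + a • (y - x)) + q • (x + b • (y - x)) := by
    have hp1 : p = 1 - q := by linarith
    subst hp1; module
  simp only [smul_eq_mul]
  rw [key]
  exact hg.2 (seg_mem' hg.1 hx hy ha) (seg_mem' hg.1 hx hy hb) hp hq hpq

lemma hasDerivAt_comp_line' {f : F → ℝ} (hf : Differentiable ℝ f) (x v : F) (t : ℝ) :
    HasDerivAt (fun s : ℝ => f (x + s • v)) ⟪gradient f (x + t • v), v⟫ t := by
  have hline : HasDerivAt (fun s : ℝ => x + s • v) v t := by
    simpa using ((hasDerivAt_id t).smul_const v).const_add x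
  have hg := (hf (x + t • v)).hasGradientAt.hasFDerivAt
  simpa [InnerProductSpace.toDual_apply_apply, Function.comp_def] using hg.comp_hasDerivAt t hline

lemma grad_nonneg_of_min' {f : F → ℝ} {s : Set F} (hs : Convex ℝ s)
    (hf : Differentiable ℝ f) {x : F} (hx : x ∈ s)
    (hmin : ∀ ξ ∈ s, f x ≤ f ξ) {y : F} (hy : y ∈ s) :
    0 ≤ ⟪gradient f x, y - x⟫ := by
  set v := y - x with hv
  have hd : HasDerivAt (fun t : ℝ => f (x + t • v)) ⟪gradient f x, v⟫ 0 := by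
    have := hasDerivAt_comp_line' hf x v 0
    simpa using this
  have htend : Tendsto (slope (fun t : ℝ => f (x + t • v)) 0) (𝓝[>] 0)
      (𝓝 ⟪gradient f x, v⟫) :=
    (hasDerivAt_iff_tendsto_slope.mp hd).mono_left
      (nhdsWithin_mono 0 fun t ht => Set.mem_compl_singleton_iff.mpr (ne_of_gt ht))
  refine ge_of_tendsto htend ?_
  filter_upwards [Ioc_mem_nhdsGT_of_mem (Set.left_mem_Ico.mpr zero_lt_one)] with t ht
  have hmem : x + t • v ∈ s := seg_mem' hs hx hy ⟨ht.1.le, ht.2⟩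
  have hle : f x ≤ f (x + t • v) := hmin _ hmem
  have hgoal : slope (fun u : ℝ => f (x + u • v)) 0 t = (f (x + t • v) - f x) / t := by
    rw [slope_def_field]; simp
  rw [hgoal]
  exact div_nonneg (by linarith) ht.1.le

lemma strong_mono' {f : F → ℝ} {s : Set F} {γ : ℝ}
    (hf : Differentiable ℝ f)
    (hsc : ConvexOn ℝ s (fun ξ => f ξ - γ / 2 * ‖ξ‖ ^ 2))
    {x y : F} (hx : x ∈ s) (hy : y ∈ s) :
    γ * ‖y - x‖ ^ 2 ≤ ⟪gradient f y - gradient f x, y - x⟫ := by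
  set v := y - x with hv
  have hφ := convexOn_comp_segment' hsc hx hy
  have hnorm : ∀ t : ℝ, ‖x + t • v‖ ^ 2 = ‖x‖ ^ 2 + 2 * t * ⟪x, v⟫ + t ^ 2 * ‖v‖ ^ 2 := by
    intro t
    rw [← real_inner_self_eq_norm_sq, ← real_inner_self_eq_norm_sq, ← real_inner_self_eq_norm_sq]
    rw [real_inner_add_add_self, real_inner_smul_right, real_inner_smul_left,
      real_inner_smul_right]
    ring
  set ψ : ℝ → ℝ := fun u => f (x + u • v) - γ/2 * (‖x‖^2 + 2*u*⟪x, v⟫ + u^2*‖v‖^2) with hψdef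
  have hψeq : (fun t => (fun ξ => f ξ - γ / 2 * ‖ξ‖ ^ 2) (x + t • v)) = ψ := by
    funext u; simp only [ψ]; rw [hnorm u]
  have hψconv : ConvexOn ℝ (Icc (0:ℝ) 1) ψ := hψeq ▸ hφ
  have hq : ∀ t : ℝ, HasDerivAt (fun u : ℝ => ‖x‖^2 + 2*u*⟪x, v⟫ + u^2*‖v‖^2)
      (2*⟪x, v⟫ + 2*t*‖v‖^2) t := by
    intro t
    have h1 : HasDerivAt (fun u:ℝ => 2*u*⟪x, v⟫) (2*⟪x, v⟫) t := by
      simpa using (HasDerivAt.const_mul (2:ℝ) (hasDerivAt_id t)).mul_const ⟪x, v⟫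
    have h2 : HasDerivAt (fun u:ℝ => u^2*‖v‖^2) (2*t*‖v‖^2) t := by
      have h := (hasDerivAt_pow 2 t).mul_const (‖v‖^2)
      norm_num at h
      convert h using 1
    exact (h1.const_add (‖x‖^2)).add h2
  have hψd : ∀ t : ℝ, HasDerivAt ψ
      (⟪gradient f (x + t • v), v⟫ - γ/2 * (2*⟪x, v⟫ + 2*t*‖v‖^2)) t := fun t =>
    (hasDerivAt_comp_line' hf x v t).sub (HasDerivAt.const_mul (γ/2) (hq t))
  have h0 := hψconv.le_slope_of_hasDerivAt (Set.mem_Icc.mpr (by norm_num))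
    (Set.mem_Icc.mpr (by norm_num)) zero_lt_one (hψd 0)
  have h1 := hψconv.slope_le_of_hasDerivAt (Set.mem_Icc.mpr (by norm_num))
    (Set.mem_Icc.mpr (by norm_num)) zero_lt_one (hψd 1)
  have hkey := h0.trans h1
  have e0 : x + (0:ℝ) • v = x := by simp
  have e1 : x + (1:ℝ) • v = y := by rw [hv]; module
  rw [e0, e1] at hkey
  rw [inner_sub_left]
  nlinarith [hkey]

end Aux


set_option maxHeartbeats 2000000 in
/-- Claim (2) of Theorem 3.5 of Perdomo et al. as stated in the paper: if `ε < γ/β`,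
repeated risk minimization converges to a unique performatively stable point at a linear
rate: `‖θ_t − θ_PS‖ ≤ δ` once `t ≥ (1 − εβ/γ)⁻¹ log(‖θ₀ − θ_PS‖/δ)`. -/
theorem rrm_converges_to_stable_point
    {d : ℕ} (Θ : Set (EuclideanSpace ℝ (Fin d)))
    (hΘne : Θ.Nonempty) (hΘclosed : IsClosed Θ) (hΘconv : Convex ℝ Θ)
    {Z : Type*} [MetricSpace Z] [MeasurableSpace Z] [BorelSpace Z]
    (ℓ : Z → EuclideanSpace ℝ (Fin d) → ℝ)
    (γ β ε : ℝ) (hγ : 0 < γ) (hβ : 0 < β) (hε : 0 < ε)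
    (hcontr : ε < γ / β)
    (D : EuclideanSpace ℝ (Fin d) → Measure Z)
    (hProb : ∀ θ ∈ Θ, IsProbabilityMeasure (D θ))
    -- (i) differentiability and γ-strong convexity of the loss in the parameter
    (hdiffℓ : ∀ z : Z, Differentiable ℝ (ℓ z))
    (hsc : ∀ z : Z, ConvexOn ℝ Θ (fun ξ => ℓ z ξ - γ / 2 * ‖ξ‖ ^ 2))
    -- (ii) β-joint smoothness of the loss
    (hsmoothz : ∀ ξ ∈ Θ, ∀ z z' : Z,
      ‖gradient (ℓ z) ξ - gradient (ℓ z') ξ‖ ≤ β * dist z z')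
    (hsmoothξ : ∀ z : Z, ∀ ξ ∈ Θ, ∀ ξ' ∈ Θ,
      ‖gradient (ℓ z) ξ - gradient (ℓ z) ξ'‖ ≤ β * ‖ξ - ξ'‖)
    -- (iii) differentiability of the expected loss with gradient the expected gradient
    (hdiff : ∀ θ ∈ Θ, Differentiable ℝ (fun ξ => ∫ z, ℓ z ξ ∂(D θ)))
    (hgradInt : ∀ (ξ : EuclideanSpace ℝ (Fin d)), ∀ θ ∈ Θ,
      Integrable (fun z => gradient (ℓ z) ξ) (D θ))
    (hgrad : ∀ θ ∈ Θ, ∀ ξ : EuclideanSpace ℝ (Fin d),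
      gradient (fun ξ' => ∫ z, ℓ z ξ' ∂(D θ)) ξ = ∫ z, gradient (ℓ z) ξ ∂(D θ))
    -- (iv) ε-sensitivity in dual (Kantorovich–Rubinstein) form
    (hsens : ∀ g : Z → ℝ, LipschitzWith 1 g → (∀ θ ∈ Θ, Integrable g (D θ)) →
      ∀ θ ∈ Θ, ∀ θ' ∈ Θ,
        |(∫ z, g z ∂(D θ)) - ∫ z, g z ∂(D θ')| ≤ ε * ‖θ - θ'‖)
    -- the RRM update operator
    (G : EuclideanSpace ℝ (Fin d) → EuclideanSpace ℝ (Fin d))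
    (hGmem : ∀ θ ∈ Θ, G θ ∈ Θ)
    (hGmin : ∀ θ ∈ Θ, ∀ ξ ∈ Θ, (∫ z, ℓ z (G θ) ∂(D θ)) ≤ ∫ z, ℓ z ξ ∂(D θ)) :
    ∃ θPS ∈ Θ, G θPS = θPS ∧
      (∀ θ' ∈ Θ, G θ' = θ' → θ' = θPS) ∧
      ∀ θ₀ ∈ Θ, θ₀ ≠ θPS → ∀ δ : ℝ, 0 < δ → ∀ t : ℕ,
        (1 - ε * (β / γ))⁻¹ * Real.log (‖θ₀ - θPS‖ / δ) ≤ (t : ℝ) →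
        ‖G^[t] θ₀ - θPS‖ ≤ δ := by
  
  set c : ℝ := ε * (β / γ) with hcdef
  have hc0 : 0 < c := by positivity
  have hc1 : c < 1 := by
    have h := mul_lt_mul_of_pos_right hcontr (div_pos hβ hγ)
    have : (γ / β) * (β / γ) = 1 := by field_simp
    rw [hcdef]; linarith
  -- contraction
  have hcontraction : ∀ θ ∈ Θ, ∀ θ' ∈ Θ, ‖G θ - G θ'‖ ≤ c * ‖θ - θ'‖ := by
    intro θ hθ θ' hθ'
    have hxΘ : G θ ∈ Θ := hGmem θ hθ
    have hyΘ : G θ' ∈ Θ := hGmem θ' hθ'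
    set x := G θ with hxdef
    set y := G θ' with hydef
    set v := y - x with hv
    haveI := hProb θ hθ
    haveI := hProb θ' hθ'
    -- strong monotonicity of the expected gradient under D θ
    have hmono : γ * ‖v‖ ^ 2 ≤
        ⟪(∫ z, gradient (ℓ z) y ∂(D θ)) - ∫ z, gradient (ℓ z) x ∂(D θ), v⟫ := by
      have hIy := (hgradInt y θ hθ).const_inner (𝕜 := ℝ) v
      have hIx := (hgradInt x θ hθ).const_inner (𝕜 := ℝ) v
      have hint : ⟪v, (∫ z, gradient (ℓ z) y ∂(D θ)) - ∫ z, gradient (ℓ z) x ∂(D θ)⟫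
          = ∫ z, (⟪v, gradient (ℓ z) y⟫ - ⟪v, gradient (ℓ z) x⟫) ∂(D θ) := by
        rw [inner_sub_right, ← integral_inner (hgradInt y θ hθ) v,
          ← integral_inner (hgradInt x θ hθ) v, ← integral_sub hIy hIx]
      rw [real_inner_comm, hint]
      have hconst : γ * ‖v‖^2 = ∫ _, γ * ‖v‖^2 ∂(D θ) := by simp
      rw [hconst]
      refine integral_mono (integrable_const _) (hIy.sub hIx) fun z => ?_
      have hpt : γ * ‖v‖ ^ 2 ≤ ⟪gradient (ℓ z) y - gradient (ℓ z) x, v⟫ :=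
        strong_mono' (hdiffℓ z) (hsc z) hxΘ hyΘ
      rw [inner_sub_left] at hpt
      have e1 := real_inner_comm v (gradient (ℓ z) y)
      have e2 := real_inner_comm v (gradient (ℓ z) x)
      simp only [Pi.sub_apply]
      linarith [hpt, e1, e2]
    -- optimality conditions
    have hfopt : 0 ≤ ⟪∫ z, gradient (ℓ z) x ∂(D θ), v⟫ := by
      have h := grad_nonneg_of_min' hΘconv (hdiff θ hθ) hxΘ
        (fun ξ hξ => hGmin θ hθ ξ hξ) hyΘ
      rwa [hgrad θ hθ x] at h
    have hfopt' : 0 ≤ ⟪∫ z, gradient (ℓ z) y ∂(D θ'), x - y⟫ := by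
      have h := grad_nonneg_of_min' hΘconv (hdiff θ' hθ') hyΘ
        (fun ξ hξ => hGmin θ' hθ' ξ hξ) hxΘ
      rwa [hgrad θ' hθ' y] at h
    set w := (∫ z, gradient (ℓ z) y ∂(D θ)) - ∫ z, gradient (ℓ z) y ∂(D θ') with hw
    have hchain : γ * ‖v‖^2 ≤ ‖w‖ * ‖v‖ := by
      have h1 : γ*‖v‖^2 ≤ ⟪∫ z, gradient (ℓ z) y ∂(D θ), v⟫
          - ⟪∫ z, gradient (ℓ z) x ∂(D θ), v⟫ := by
        rw [← inner_sub_left]; exact hmono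
      have h2 : ⟪∫ z, gradient (ℓ z) y ∂(D θ'), v⟫ ≤ 0 := by
        have he : ⟪∫ z, gradient (ℓ z) y ∂(D θ'), x - y⟫
            = - ⟪∫ z, gradient (ℓ z) y ∂(D θ'), v⟫ := by
          rw [hv, show x - y = -(y - x) by abel, inner_neg_right]
        linarith [hfopt', he.symm.le, he.le]
      have h3 : ⟪w, v⟫ ≤ ‖w‖ * ‖v‖ := real_inner_le_norm w v
      have h4 : ⟪w, v⟫ = ⟪∫ z, gradient (ℓ z) y ∂(D θ), v⟫
          - ⟪∫ z, gradient (ℓ z) y ∂(D θ'), v⟫ := inner_sub_left _ _ _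
      linarith [hfopt]
    -- sensitivity bound on ‖w‖
    have hwbound : ‖w‖ ≤ β * (ε * ‖θ - θ'‖) := by
      rcases eq_or_ne w 0 with h0 | h0
      · rw [h0, norm_zero]; positivity
      · set u := ‖w‖⁻¹ • w with hu
        have hwn : ‖w‖ ≠ 0 := norm_ne_zero_iff.mpr h0
        have hun : ‖u‖ = 1 := by
          rw [hu, norm_smul, norm_inv, norm_norm, inv_mul_cancel₀ hwn]
        set φ : Z → ℝ := fun z => β⁻¹ * ⟪u, gradient (ℓ z) y⟫ with hφ
        have hlip : LipschitzWith 1 φ := by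
          refine LipschitzWith.of_dist_le_mul fun z z' => ?_
          rw [Real.dist_eq, NNReal.coe_one, one_mul]
          have hd : φ z - φ z' = β⁻¹ * ⟪u, gradient (ℓ z) y - gradient (ℓ z') y⟫ := by
            rw [hφ]; simp only []; rw [inner_sub_right]; ring
          rw [hd, abs_mul, abs_of_nonneg (inv_nonneg.mpr hβ.le)]
          have hinner : |⟪u, gradient (ℓ z) y - gradient (ℓ z') y⟫|
              ≤ ‖gradient (ℓ z) y - gradient (ℓ z') y‖ := by
            have := abs_real_inner_le_norm u (gradient (ℓ z) y - gradient (ℓ z') y)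
            rwa [hun, one_mul] at this
          calc β⁻¹ * |⟪u, gradient (ℓ z) y - gradient (ℓ z') y⟫|
              ≤ β⁻¹ * (β * dist z z') := by
                have := hinner.trans (hsmoothz y hyΘ z z')
                exact mul_le_mul_of_nonneg_left this (inv_nonneg.mpr hβ.le)
            _ = dist z z' := by field_simp
        have hintφ : ∀ θ'' ∈ Θ, Integrable φ (D θ'') := fun θ'' hθ'' =>
          ((hgradInt y θ'' hθ'').const_inner (𝕜 := ℝ) u).const_mul β⁻¹
        have hsens' := hsens φ hlip hintφ θ hθ θ' hθ'
        have hiw : ⟪u, w⟫ = ‖w‖ := by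
          rw [hu, real_inner_smul_left, real_inner_self_eq_norm_sq]
          field_simp
        have hsplit : (∫ z, φ z ∂(D θ)) - ∫ z, φ z ∂(D θ') = β⁻¹ * ⟪u, w⟫ := by
          simp only [hφ]
          rw [integral_const_mul, integral_const_mul,
            integral_inner (hgradInt y θ hθ) u, integral_inner (hgradInt y θ' hθ') u,
            hw, inner_sub_right]
          ring
        rw [hsplit, hiw] at hsens'
        have habs : β⁻¹ * ‖w‖ ≤ ε * ‖θ - θ'‖ :=
          (le_abs_self _).trans hsens'
        calc ‖w‖ = β * (β⁻¹ * ‖w‖) := by field_simp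
          _ ≤ β * (ε * ‖θ - θ'‖) := mul_le_mul_of_nonneg_left habs hβ.le
    have hfinal : γ * ‖v‖^2 ≤ (β * (ε * ‖θ - θ'‖)) * ‖v‖ :=
      hchain.trans (mul_le_mul_of_nonneg_right hwbound (norm_nonneg v))
    have hxyv : ‖x - y‖ = ‖v‖ := by rw [hv, norm_sub_rev]
    rcases eq_or_ne v 0 with hv0 | hv0
    · rw [hxyv, hv0, norm_zero]; positivity
    · have hvpos : 0 < ‖v‖ := norm_pos_iff.mpr hv0
      have hγv : γ * ‖v‖ ≤ β * (ε * ‖θ - θ'‖) := by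
        rw [pow_two] at hfinal
        nlinarith [hvpos]
      rw [hxyv]
      have hcc : c * ‖θ - θ'‖ = (β * (ε * ‖θ - θ'‖)) / γ := by
        rw [hcdef]; field_simp
      rw [hcc, le_div_iff₀ hγ]
      nlinarith [hγv]
  -- fixed point on the subtype
  haveI : Nonempty Θ := hΘne.to_subtype
  haveI : CompleteSpace Θ := hΘclosed.completeSpace_coe
  set Fm : Θ → Θ := fun p => ⟨G p, hGmem p p.2⟩ with hFm
  have hK1 : (⟨c, hc0.le⟩ : NNReal) < 1 := by
    exact NNReal.coe_lt_coe.mp hc1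
  have hFlip : LipschitzWith ⟨c, hc0.le⟩ Fm := by
    refine LipschitzWith.of_dist_le_mul fun p q => ?_
    rw [Subtype.dist_eq, Subtype.dist_eq, dist_eq_norm, dist_eq_norm]
    exact hcontraction p p.2 q q.2
  have hFcontr : ContractingWith ⟨c, hc0.le⟩ Fm := ⟨hK1, hFlip⟩
  obtain ⟨p, hp⟩ : ∃ p : ↥Θ, Fm p = p :=
    ⟨ContractingWith.fixedPoint Fm hFcontr, hFcontr.fixedPoint_isFixedPt⟩
  have hGfix : G p.1 = p.1 := congrArg Subtype.val hp
  refine ⟨p.1, p.2, hGfix, ?_, ?_⟩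
  · intro θ' hθ' hfixθ'
    by_contra hneq
    have h := hcontraction θ' hθ' p.1 p.2
    rw [hfixθ', hGfix] at h
    have hpos : 0 < ‖θ' - p.1‖ :=
      norm_pos_iff.mpr (sub_ne_zero.mpr hneq)
    nlinarith [h, hpos, hc1]
  · intro θ₀ hθ₀ hne δ hδ t ht
    have hR : 0 < ‖θ₀ - p.1‖ := norm_pos_iff.mpr (sub_ne_zero.mpr hne)
    have hiter : ∀ n : ℕ, G^[n] θ₀ ∈ Θ ∧ ‖G^[n] θ₀ - p.1‖ ≤ c ^ n * ‖θ₀ - p.1‖ := by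
      intro n; induction n with
      | zero => exact ⟨hθ₀, by simp⟩
      | succ n ih =>
        constructor
        · rw [Function.iterate_succ_apply']; exact hGmem _ ih.1
        · rw [Function.iterate_succ_apply']
          calc ‖G (G^[n] θ₀) - p.1‖ = ‖G (G^[n] θ₀) - G p.1‖ := by rw [hGfix]
            _ ≤ c * ‖G^[n] θ₀ - p.1‖ := hcontraction _ ih.1 p.1 p.2
            _ ≤ c * (c ^ n * ‖θ₀ - p.1‖) := mul_le_mul_of_nonneg_left ih.2 hc0.le
            _ = c ^ (n+1) * ‖θ₀ - p.1‖ := by ring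
    refine (hiter t).2.trans ?_
    have h1c : 0 < 1 - c := by linarith
    have hlog : Real.log (‖θ₀ - p.1‖/δ) ≤ (t:ℝ) * (1 - c) := by
      have h := mul_le_mul_of_nonneg_left ht h1c.le
      rw [← mul_assoc, mul_inv_cancel₀ h1c.ne', one_mul] at h
      nlinarith [h]
    have hct : c ^ t ≤ δ / ‖θ₀ - p.1‖ := by
      have hexp : (c : ℝ) ^ t = Real.exp ((t:ℝ) * Real.log c) := by
        rw [← Real.exp_log (pow_pos hc0 t), Real.log_pow]
      have hle : (t:ℝ) * Real.log c ≤ Real.log (δ / ‖θ₀ - p.1‖) := by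
        have hlogc : Real.log c ≤ c - 1 := Real.log_le_sub_one_of_pos hc0
        have h2 : (t:ℝ) * Real.log c ≤ (t:ℝ) * (c - 1) :=
          mul_le_mul_of_nonneg_left hlogc (Nat.cast_nonneg t)
        have h3 : Real.log (δ / ‖θ₀ - p.1‖) = - Real.log (‖θ₀ - p.1‖/δ) := by
          rw [← Real.log_inv]
          congr 1
          rw [inv_div]
        rw [h3]
        nlinarith [hlog, h2]
      rw [hexp]
      calc Real.exp ((t:ℝ) * Real.log c) ≤ Real.exp (Real.log (δ/‖θ₀ - p.1‖)) :=
            Real.exp_le_exp.mpr hle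
        _ = δ/‖θ₀ - p.1‖ := Real.exp_log (div_pos hδ hR)
    calc c^t * ‖θ₀ - p.1‖ ≤ (δ/‖θ₀ - p.1‖) * ‖θ₀ - p.1‖ :=
          mul_le_mul_of_nonneg_right hct (norm_nonneg _)
      _ = δ := div_mul_cancel₀ δ hR.ne'
end
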